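/- Let α ∈ (0,1) and λ₁ > 0, and define E_{α,1}(x) := ∑_{k=0}^∞ x^k · (Γ(α k + 1))⁻¹ for x ∈ ℝ. Then there exists C > 0, depending only on α and λ₁, such that for every sequence (λ_k)_{k∈ℕ} of reals with λ_k ≥ λ₁ for all k, every real sequence (a_k)_{k∈ℕ} with ∑_k λ_k² a_k² < ∞, and every t > 0, one has ∑_{k} λ_k² · E_{α,1}(-λ_k t^α)² · a_k² ≤ C (1 + t^α)^{-2} ∑_{k} λ_k² a_k². -/

import Mathlib

open Real MeasureTheory Set intervalIntegral Filter Topology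

/-- Lower bound for Gamma. -/
lemma gamma_lb {A s : ℝ} (hA : 1 ≤ A) (hs : 1 ≤ s) :
    A ^ s * Real.exp (-(2*A)) ≤ Real.Gamma s := by
  have hA0 : (0:ℝ) < A := lt_of_lt_of_le one_pos hA
  have hs0 : (0:ℝ) < s := lt_of_lt_of_le one_pos hs
  rw [Real.Gamma_eq_integral hs0]
  have hsub : Set.Ioc A (2*A) ⊆ Set.Ioi (0:ℝ) := by
    intro x hx; exact lt_trans hA0 hx.1
  have hint : IntegrableOn (fun x : ℝ => Real.exp (-x) * x ^ (s-1)) (Set.Ioi 0) :=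
    Real.GammaIntegral_convergent hs0
  have h1 : ∫ x in Set.Ioc A (2*A), Real.exp (-x) * x ^ (s-1) ≤
      ∫ x in Set.Ioi (0:ℝ), Real.exp (-x) * x ^ (s-1) := by
    apply setIntegral_mono_set hint
    · filter_upwards [MeasureTheory.ae_restrict_mem measurableSet_Ioi] with x hx
      have : (0:ℝ) < x := hx
      positivity
    · exact Filter.Eventually.of_forall hsub
  refine le_trans ?_ h1
  have hconst : ∀ x ∈ Set.Ioc A (2*A), A ^ (s-1) * Real.exp (-(2*A)) ≤
      Real.exp (-x) * x ^ (s-1) := by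
    intro x hx
    have hx1 : A ≤ x := le_of_lt hx.1
    have hx2 : x ≤ 2*A := hx.2
    have h1 : A ^ (s-1) ≤ x ^ (s-1) :=
      Real.rpow_le_rpow (le_of_lt hA0) hx1 (by linarith)
    have h2 : Real.exp (-(2*A)) ≤ Real.exp (-x) := by
      apply Real.exp_le_exp.mpr; linarith
    calc A ^ (s-1) * Real.exp (-(2*A)) ≤ x ^ (s-1) * Real.exp (-x) := by
          have hxp : (0:ℝ) < x := lt_of_lt_of_le hA0 hx1
          apply mul_le_mul h1 h2 (le_of_lt (Real.exp_pos _)) (by positivity)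
      _ = Real.exp (-x) * x ^ (s-1) := by ring
  have hmeas : MeasurableSet (Set.Ioc A (2*A)) := measurableSet_Ioc
  have hvol : (volume (Set.Ioc A (2*A))).toReal = A := by
    rw [Real.volume_Ioc, ENNReal.toReal_ofReal (by linarith)]; ring
  have := MeasureTheory.setIntegral_ge_of_const_le hmeas
    (by rw [Real.volume_Ioc]; exact ENNReal.ofReal_ne_top)
    hconst (hint.mono_set hsub)
  rw [measureReal_def, hvol] at this
  calc A ^ s * Real.exp (-(2*A)) = A ^ (s-1) * Real.exp (-(2*A)) * A := by
        rw [show s = (s-1)+1 by ring, Real.rpow_add hA0]; simp [Real.rpow_one]; ring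
    _ ≤ _ := by rw [smul_eq_mul, mul_comm] at this; exact this

lemma gamma_pos' {α δ : ℝ} (hα : 0 ≤ α) (hδ : 0 < δ) (k : ℕ) :
    0 < Real.Gamma (α * k + δ) :=
  Real.Gamma_pos_of_pos (by positivity)

/-- Summability of `x^k / Γ(αk+δ)`. -/
lemma summable_inv_gamma {α δ : ℝ} (hα : 0 < α) (hδ : 0 < δ) {x : ℝ} (hx : 0 ≤ x) :
    Summable (fun k : ℕ => x ^ k * (Real.Gamma (α * k + δ))⁻¹) := by
  obtain ⟨k₀, hk₀⟩ : ∃ k₀ : ℕ, 1 ≤ α * k₀ := by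
    obtain ⟨n, hn⟩ := exists_nat_ge (1/α)
    exact ⟨n, by rw [div_le_iff₀ hα] at hn; linarith⟩
  rw [← summable_nat_add_iff k₀]
  set A : ℝ := max 1 ((2*x) ^ (α⁻¹)) with hA
  have hA1 : 1 ≤ A := le_max_left _ _
  have hA0 : (0:ℝ) < A := lt_of_lt_of_le one_pos hA1
  have hAx : 2*x ≤ A ^ α := by
    calc 2*x = ((2*x) ^ (α⁻¹)) ^ α := by
          rw [Real.rpow_inv_rpow (by linarith) (ne_of_gt hα)]
      _ ≤ A ^ α := Real.rpow_le_rpow (Real.rpow_nonneg (by linarith) _)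
          (le_max_right _ _) (le_of_lt hα)
  have hAα : (0:ℝ) < A ^ α := Real.rpow_pos_of_pos hA0 _
  set c : ℝ := A ^ (α * k₀ + δ) * Real.exp (-(2*A)) with hc
  have hcpos : 0 < c := by positivity
  have key : ∀ k : ℕ, x ^ (k + k₀) * (Real.Gamma (α * ↑(k + k₀) + δ))⁻¹ ≤
      (c⁻¹ * x ^ k₀) * (1/2) ^ k := by
    intro k
    have hcast : (↑(k + k₀) : ℝ) = (k : ℝ) + k₀ := by push_cast; ring
    rw [hcast]
    have hs1 : 1 ≤ α * ((k : ℝ) + k₀) + δ := by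
      have h1 : (0:ℝ) ≤ α * k := by positivity
      have hδ' := hδ.le
      nlinarith [hk₀]
    have hgb : (A ^ α) ^ k * c ≤ Real.Gamma (α * ((k:ℝ) + k₀) + δ) := by
      refine le_trans (le_of_eq ?_) (gamma_lb hA1 hs1)
      rw [hc, ← mul_assoc, ← Real.rpow_natCast (A ^ α) k, ← Real.rpow_mul hA0.le,
        ← Real.rpow_add hA0]
      ring_nf
    have hgpos : 0 < Real.Gamma (α * ((k:ℝ) + k₀) + δ) := Real.Gamma_pos_of_pos (by positivity)
    have h2 : (Real.Gamma (α * ((k:ℝ) + k₀) + δ))⁻¹ ≤ ((A ^ α) ^ k * c)⁻¹ :=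
      inv_anti₀ (by positivity) hgb
    have h3 : x ^ k * ((A ^ α) ^ k)⁻¹ ≤ (1/2) ^ k := by
      rw [← div_eq_mul_inv, div_le_iff₀ (by positivity)]
      have h4 : (2*x) ^ k ≤ (A ^ α) ^ k := pow_le_pow_left₀ (by positivity) hAx k
      rw [mul_pow] at h4
      calc x ^ k = ((1:ℝ)/2) ^ k * ((2:ℝ) ^ k * x ^ k) := by
            rw [← mul_assoc, ← mul_pow]; norm_num
        _ ≤ (1/2) ^ k * (A ^ α) ^ k := by
            apply mul_le_mul_of_nonneg_left h4 (by positivity)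
    calc x ^ (k + k₀) * (Real.Gamma (α * ((k:ℝ) + k₀) + δ))⁻¹
        ≤ x ^ (k + k₀) * ((A ^ α) ^ k * c)⁻¹ := by
          apply mul_le_mul_of_nonneg_left h2 (by positivity)
      _ = (x ^ k * ((A ^ α) ^ k)⁻¹) * (x ^ k₀ * c⁻¹) := by
          rw [pow_add, mul_inv]; ring
      _ ≤ (1/2) ^ k * (x ^ k₀ * c⁻¹) := by
          apply mul_le_mul_of_nonneg_right h3 (by positivity)
      _ = (c⁻¹ * x ^ k₀) * (1/2) ^ k := by ring
  apply Summable.of_nonneg_of_le (fun k => by positivity) key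
  exact (summable_geometric_of_lt_one (by norm_num) (by norm_num)).mul_left _

/-- Real Beta integral. -/
lemma beta_real {a b : ℝ} (ha : 0 < a) (hb : 0 < b) :
    ∫ x in (0:ℝ)..1, x ^ (a-1) * (1-x) ^ (b-1) =
      Real.Gamma a * Real.Gamma b / Real.Gamma (a+b) := by
  have hcmpl : Complex.betaIntegral a b =
      ((∫ x in (0:ℝ)..1, x ^ (a-1) * (1-x) ^ (b-1) : ℝ) : ℂ) := by
    rw [Complex.betaIntegral, ← intervalIntegral.integral_ofReal]
    apply intervalIntegral.integral_congr
    intro x hx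
    rw [Set.uIcc_of_le (by norm_num : (0:ℝ) ≤ 1)] at hx
    have hx0 : 0 ≤ x := hx.1
    have hx1 : 0 ≤ 1 - x := by linarith [hx.2]
    have e1 : ((x ^ (a-1) : ℝ) : ℂ) = (x:ℂ) ^ ((a:ℂ)-1) := by
      rw [Complex.ofReal_cpow hx0]; push_cast; ring_nf
    have e2 : (((1-x) ^ (b-1) : ℝ) : ℂ) = (1-(x:ℂ)) ^ ((b:ℂ)-1) := by
      rw [Complex.ofReal_cpow hx1]; push_cast; ring_nf
    push_cast
    rw [← e1, ← e2]
  have hΓ := Complex.Gamma_mul_Gamma_eq_betaIntegral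
    (by simpa using ha : 0 < (a:ℂ).re) (by simpa using hb : 0 < (b:ℂ).re)
  rw [hcmpl, show (a:ℂ)+(b:ℂ) = ((a+b:ℝ):ℂ) by push_cast; ring,
    Complex.Gamma_ofReal, Complex.Gamma_ofReal, Complex.Gamma_ofReal] at hΓ
  have hre : Real.Gamma a * Real.Gamma b =
      Real.Gamma (a+b) * ∫ x in (0:ℝ)..1, x ^ (a-1) * (1-x) ^ (b-1) := by
    exact_mod_cast hΓ
  have hΓab : Real.Gamma (a+b) ≠ 0 := (Real.Gamma_pos_of_pos (by linarith)).ne'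
  field_simp
  linarith [hre]

/-- Mean value bound for rpow differences. -/
lemma rpow_sub_rpow_le {β s t : ℝ} (hβ : 0 < β) (hs : 0 < s) (hst : s ≤ t) :
    t ^ β - s ^ β ≤ β * max (s ^ (β-1)) (t ^ (β-1)) * (t - s) := by
  rcases eq_or_lt_of_le hst with rfl | hlt
  · simp
  have ht : 0 < t := lt_trans hs hlt
  have hcont : ContinuousOn (fun x : ℝ => x ^ β) (Icc s t) := by
    intro x hx
    exact (Real.continuousAt_rpow_const x β
      (Or.inl (lt_of_lt_of_le hs hx.1).ne')).continuousWithinAt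
  have hderiv : ∀ x ∈ Ioo s t, HasDerivAt (fun x : ℝ => x ^ β) (β * x ^ (β-1)) x := by
    intro x hx
    exact Real.hasDerivAt_rpow_const (Or.inl (lt_trans hs hx.1).ne')
  obtain ⟨c, hc, hceq⟩ := exists_hasDerivAt_eq_slope (fun x : ℝ => x ^ β)
    (fun x => β * x ^ (β-1)) hlt hcont hderiv
  have hcb : c ^ (β-1) ≤ max (s ^ (β-1)) (t ^ (β-1)) := by
    rcases le_or_gt 1 β with h1 | h1
    · exact le_max_of_le_right
        (Real.rpow_le_rpow (lt_trans hs hc.1).le hc.2.le (by linarith))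
    · exact le_max_of_le_left
        (Real.rpow_le_rpow_of_nonpos hs hc.1.le (by linarith))
  have hslope : t ^ β - s ^ β = β * c ^ (β-1) * (t - s) := by
    rw [eq_div_iff (sub_ne_zero.mpr hlt.ne')] at hceq
    linarith [hceq]
  rw [hslope]
  have : β * c ^ (β-1) ≤ β * max (s ^ (β-1)) (t ^ (β-1)) :=
    mul_le_mul_of_nonneg_left hcb hβ.le
  apply mul_le_mul_of_nonneg_right this (by linarith)


section KeyIntegral

variable {α β t : ℝ}

lemma integrableOn_sub_rpow (hα1 : α < 1) (ht : 0 < t) :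
    IntegrableOn (fun s : ℝ => (t-s) ^ (-α)) (Ioo 0 t) := by
  have h1 : IntervalIntegrable (fun x : ℝ => x ^ (-α)) volume 0 t :=
    intervalIntegrable_rpow' (by linarith)
  have h2 := (h1.comp_sub_left t).symm
  simp only [sub_self, sub_zero] at h2
  rw [intervalIntegrable_iff_integrableOn_Ioc_of_le ht.le] at h2
  exact h2.mono_set Ioo_subset_Ioc_self

lemma integrableOn_rpow₀ (hβ : 0 < β) (ht : 0 < t) :
    IntegrableOn (fun s : ℝ => s ^ (β-1)) (Ioo 0 t) := by
  have h1 : IntervalIntegrable (fun x : ℝ => x ^ (β-1)) volume 0 t :=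
    intervalIntegrable_rpow' (by linarith)
  rw [intervalIntegrable_iff_integrableOn_Ioc_of_le ht.le] at h1
  exact h1.mono_set Ioo_subset_Ioc_self

lemma cont_on_g (ht : 0 < t) :
    ContinuousOn (fun s : ℝ => (t ^ β - s ^ β) * (t-s) ^ (-α-1)) (Ioo 0 t) := by
  intro x hx
  apply ContinuousAt.continuousWithinAt
  have h1 : ContinuousAt (fun s : ℝ => t ^ β - s ^ β) x :=
    continuousAt_const.sub (Real.continuousAt_rpow_const x β (Or.inl hx.1.ne'))
  have h2 : ContinuousAt (fun s : ℝ => (t-s) ^ (-α-1)) x := by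
    have : ContinuousAt (fun s : ℝ => t - s) x := continuousAt_const.sub continuousAt_id
    exact (Real.continuousAt_rpow_const (t-x) (-α-1)
      (Or.inl (sub_pos.mpr hx.2).ne')).comp this
  exact h1.mul h2

lemma cont_on_h (ht : 0 < t) :
    ContinuousOn (fun s : ℝ => s ^ (β-1) * (t-s) ^ (-α)) (Ioo 0 t) := by
  intro x hx
  apply ContinuousAt.continuousWithinAt
  have h1 : ContinuousAt (fun s : ℝ => s ^ (β-1)) x :=
    Real.continuousAt_rpow_const x (β-1) (Or.inl hx.1.ne')
  have h2 : ContinuousAt (fun s : ℝ => (t-s) ^ (-α)) x := by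
    have : ContinuousAt (fun s : ℝ => t - s) x := continuousAt_const.sub continuousAt_id
    exact (Real.continuousAt_rpow_const (t-x) (-α)
      (Or.inl (sub_pos.mpr hx.2).ne')).comp this
  exact h1.mul h2

lemma max_rpow_bound (hβ : 0 < β) (ht : 0 < t) {s : ℝ} (hs : t/2 ≤ s) (hst : s ≤ t) :
    max (s ^ (β-1)) (t ^ (β-1)) ≤ max ((t/2) ^ (β-1)) (t ^ (β-1)) := by
  have ht2 : (0:ℝ) < t/2 := by linarith
  apply max_le _ (le_max_right _ _)
  rcases le_or_gt 1 β with h1 | h1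
  · exact le_max_of_le_right (Real.rpow_le_rpow (by linarith) hst (by linarith))
  · exact le_max_of_le_left (Real.rpow_le_rpow_of_nonpos ht2 hs (by linarith))

lemma g_nonneg (hβ : 0 < β) {s : ℝ} (hs : s ∈ Ioo 0 t) :
    0 ≤ (t ^ β - s ^ β) * (t-s) ^ (-α-1) := by
  have hts : (0:ℝ) ≤ t - s := by linarith [hs.2]
  apply mul_nonneg
  · have := Real.rpow_le_rpow hs.1.le hs.2.le hβ.le
    linarith
  · exact Real.rpow_nonneg hts _

lemma g_bound (hα0 : 0 < α) (hβ : 0 < β) (ht : 0 < t) {s : ℝ} (hs : s ∈ Ioo 0 t) :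
    (t ^ β - s ^ β) * (t-s) ^ (-α-1) ≤
      t ^ β * (t/2) ^ (-α-1) +
        (β * max ((t/2) ^ (β-1)) (t ^ (β-1))) * (t-s) ^ (-α) := by
  have ht2 : (0:ℝ) < t/2 := by linarith
  have hts : (0:ℝ) < t - s := sub_pos.mpr hs.2
  rcases le_or_gt s (t/2) with hc | hc
  · have h1 : (t-s) ^ (-α-1) ≤ (t/2) ^ (-α-1) :=
      Real.rpow_le_rpow_of_nonpos ht2 (by linarith) (by linarith)
    have h2 : t ^ β - s ^ β ≤ t ^ β := by
      have : (0:ℝ) ≤ s ^ β := Real.rpow_nonneg hs.1.le β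
      linarith
    have h3 : (t ^ β - s ^ β) * (t-s) ^ (-α-1) ≤ t ^ β * (t/2) ^ (-α-1) := by
      apply mul_le_mul h2 h1 (by positivity) (Real.rpow_nonneg ht.le β)
    have h4 : (0:ℝ) ≤ (β * max ((t/2) ^ (β-1)) (t ^ (β-1))) * (t-s) ^ (-α) :=
      mul_nonneg (mul_nonneg hβ.le (le_trans (Real.rpow_nonneg ht.le _) (le_max_right _ _)))
        (Real.rpow_nonneg hts.le _)
    linarith
  · have h1 : t ^ β - s ^ β ≤ (β * max ((t/2) ^ (β-1)) (t ^ (β-1))) * (t-s) := by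
      calc t ^ β - s ^ β ≤ β * max (s ^ (β-1)) (t ^ (β-1)) * (t-s) :=
            rpow_sub_rpow_le hβ (lt_trans ht2 hc) hs.2.le
        _ ≤ (β * max ((t/2) ^ (β-1)) (t ^ (β-1))) * (t-s) := by
            apply mul_le_mul_of_nonneg_right _ hts.le
            exact mul_le_mul_of_nonneg_left (max_rpow_bound hβ ht hc.le hs.2.le) hβ.le
    have h2 : (t-s) * (t-s) ^ (-α-1) = (t-s) ^ (-α) := by
      rw [show (-α:ℝ) = 1 + (-α-1) by ring, Real.rpow_one_add' hts.le (by linarith)]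
      norm_num
    have h3 : (t ^ β - s ^ β) * (t-s) ^ (-α-1) ≤
        (β * max ((t/2) ^ (β-1)) (t ^ (β-1))) * (t-s) ^ (-α) := by
      calc (t ^ β - s ^ β) * (t-s) ^ (-α-1)
          ≤ ((β * max ((t/2) ^ (β-1)) (t ^ (β-1))) * (t-s)) * (t-s) ^ (-α-1) := by
            apply mul_le_mul_of_nonneg_right h1 (by positivity)
        _ = (β * max ((t/2) ^ (β-1)) (t ^ (β-1))) * ((t-s) * (t-s) ^ (-α-1)) := by ring
        _ = _ := by rw [h2]
    have h4 : (0:ℝ) ≤ t ^ β * (t/2) ^ (-α-1) := by positivity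
    linarith

lemma integrableOn_g (hα0 : 0 < α) (hα1 : α < 1) (hβ : 0 < β) (ht : 0 < t) :
    IntegrableOn (fun s : ℝ => (t ^ β - s ^ β) * (t-s) ^ (-α-1)) (Ioo 0 t) := by
  have hmaj : IntegrableOn (fun s : ℝ => t ^ β * (t/2) ^ (-α-1) +
      (β * max ((t/2) ^ (β-1)) (t ^ (β-1))) * (t-s) ^ (-α)) (Ioo 0 t) := by
    apply Integrable.add
    · exact integrableOn_const measure_Ioo_lt_top.ne
    · exact (integrableOn_sub_rpow hα1 ht).const_mul _
  apply Integrable.mono' hmaj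
    ((cont_on_g ht).aestronglyMeasurable measurableSet_Ioo)
  filter_upwards [ae_restrict_mem measurableSet_Ioo] with s hs
  rw [Real.norm_eq_abs, abs_of_nonneg (g_nonneg hβ hs)]
  exact g_bound hα0 hβ ht hs

lemma integrableOn_h (hα0 : 0 < α) (hα1 : α < 1) (hβ : 0 < β) (ht : 0 < t) :
    IntegrableOn (fun s : ℝ => s ^ (β-1) * (t-s) ^ (-α)) (Ioo 0 t) := by
  have ht2 : (0:ℝ) < t/2 := by linarith
  have hmaj : IntegrableOn (fun s : ℝ => (t/2) ^ (-α) * s ^ (β-1) +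
      (max ((t/2) ^ (β-1)) (t ^ (β-1))) * (t-s) ^ (-α)) (Ioo 0 t) := by
    apply Integrable.add
    · exact (integrableOn_rpow₀ hβ ht).const_mul _
    · exact (integrableOn_sub_rpow hα1 ht).const_mul _
  apply Integrable.mono' hmaj
    ((cont_on_h ht).aestronglyMeasurable measurableSet_Ioo)
  filter_upwards [ae_restrict_mem measurableSet_Ioo] with s hs
  have hts : (0:ℝ) < t - s := sub_pos.mpr hs.2
  rw [Real.norm_eq_abs, abs_of_nonneg (mul_nonneg (Real.rpow_nonneg hs.1.le _)
    (Real.rpow_nonneg hts.le _))]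
  rcases le_or_gt s (t/2) with hc | hc
  · have h1 : (t-s) ^ (-α) ≤ (t/2) ^ (-α) :=
      Real.rpow_le_rpow_of_nonpos ht2 (by linarith) (by linarith)
    have h2 : s ^ (β-1) * (t-s) ^ (-α) ≤ (t/2) ^ (-α) * s ^ (β-1) := by
      rw [mul_comm ((t/2) ^ (-α))]
      exact mul_le_mul_of_nonneg_left h1 (Real.rpow_nonneg hs.1.le _)
    have h3 : (0:ℝ) ≤ (max ((t/2) ^ (β-1)) (t ^ (β-1))) * (t-s) ^ (-α) :=
      mul_nonneg (le_trans (Real.rpow_nonneg ht.le _) (le_max_right _ _))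
        (Real.rpow_nonneg hts.le _)
    linarith
  · have h1 : s ^ (β-1) ≤ max ((t/2) ^ (β-1)) (t ^ (β-1)) := by
      rcases le_or_gt 1 β with hb1 | hb1
      · exact le_max_of_le_right (Real.rpow_le_rpow hs.1.le hs.2.le (by linarith))
      · exact le_max_of_le_left (Real.rpow_le_rpow_of_nonpos ht2 hc.le (by linarith))
    have h2 : s ^ (β-1) * (t-s) ^ (-α) ≤
        (max ((t/2) ^ (β-1)) (t ^ (β-1))) * (t-s) ^ (-α) :=
      mul_le_mul_of_nonneg_right h1 (Real.rpow_nonneg hts.le _)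
    have h3 : (0:ℝ) ≤ (t/2) ^ (-α) * s ^ (β-1) :=
      mul_nonneg (Real.rpow_nonneg ht2.le _) (Real.rpow_nonneg hs.1.le _)
    linarith

end KeyIntegral

section KI
variable {α β t : ℝ}

lemma betaInt_val (hα0 : 0 < α) (hα1 : α < 1) (hβ : 0 < β) (ht : 0 < t) :
    ∫ s in Ioo 0 t, s ^ (β-1) * (t-s) ^ (-α) =
      t ^ (β-α) * (Real.Gamma β * Real.Gamma (1-α) / Real.Gamma (β+1-α)) := by
  have h1 : ∫ s in Ioo 0 t, s ^ (β-1) * (t-s) ^ (-α)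
      = ∫ s in (0:ℝ)..t, s ^ (β-1) * (t-s) ^ (-α) := by
    rw [intervalIntegral.integral_of_le ht.le, MeasureTheory.integral_Ioc_eq_integral_Ioo]
  have h2 := intervalIntegral.integral_comp_mul_left
    (a := (0:ℝ)) (b := (1:ℝ)) (fun s : ℝ => s ^ (β-1) * (t-s) ^ (-α)) ht.ne'
  simp only [mul_zero, mul_one] at h2
  have h3 : ∫ x in (0:ℝ)..1, (t*x) ^ (β-1) * (t-t*x) ^ (-α)
      = ∫ x in (0:ℝ)..1, (t ^ (β-1) * t ^ (-α)) * (x ^ (β-1) * (1-x) ^ ((1-α)-1)) := by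
    apply intervalIntegral.integral_congr
    intro x hx
    rw [Set.uIcc_of_le (by norm_num : (0:ℝ) ≤ 1)] at hx
    have hx0 : 0 ≤ x := hx.1
    have hx1 : 0 ≤ 1 - x := by linarith [hx.2]
    have e1 : (t*x) ^ (β-1) = t ^ (β-1) * x ^ (β-1) := Real.mul_rpow ht.le hx0
    have e2 : (t-t*x) ^ (-α) = t ^ (-α) * (1-x) ^ (-α) := by
      rw [show t - t*x = t*(1-x) by ring, Real.mul_rpow ht.le hx1]
    simp only [e1, e2, show (1-α)-1 = -α by ring]
    ring
  rw [h3, intervalIntegral.integral_const_mul,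
    beta_real hβ (by linarith : (0:ℝ) < 1-α)] at h2
  have h5 := congrArg (fun z => t * z) h2
  simp only [smul_eq_mul, ← mul_assoc, mul_inv_cancel₀ ht.ne', one_mul] at h5
  rw [h1, ← h5]
  have hpow : t * t ^ (β-1) * t ^ (-α) = t ^ (β-α) := by
    rw [show t * t ^ (β-1) * t ^ (-α) = t ^ (1:ℝ) * t ^ (β-1) * t ^ (-α) by
      rw [Real.rpow_one], ← Real.rpow_add ht, ← Real.rpow_add ht]
    congr 1
    ring
  rw [show β + (1-α) = β+1-α by ring, ← hpow]

lemma key_integral (hα0 : 0 < α) (hα1 : α < 1) (hβ : 0 < β) (ht : 0 < t) :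
    α * ∫ s in Ioo 0 t, (t ^ β - s ^ β) * (t-s) ^ (-α-1) =
      t ^ (β-α) * (Real.Gamma (1-α) * Real.Gamma (β+1) / Real.Gamma (β+1-α) - 1) := by
  set g : ℝ → ℝ := fun s => (t ^ β - s ^ β) * (t-s) ^ (-α-1) with hg
  set h : ℝ → ℝ := fun s => s ^ (β-1) * (t-s) ^ (-α) with hh
  set G : ℝ → ℝ := fun s => (t-s) ^ (-α) * (t ^ β - s ^ β) with hG
  set a : ℕ → ℝ := fun n => t/((n:ℝ)+2) with ha
  set b : ℕ → ℝ := fun n => t - t/((n:ℝ)+2) with hb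
  have han : ∀ n, 0 < a n := fun n => by positivity
  have ha2 : ∀ n, a n ≤ t/2 := by
    intro n
    apply div_le_div_of_nonneg_left ht.le (by norm_num)
    · norm_num
  have hbn : ∀ n, t/2 ≤ b n := fun n => by
    have := ha2 n; simp only [hb]; linarith
  have hbt : ∀ n, b n < t := fun n => by
    have := han n; simp only [hb]; linarith
  have hab : ∀ n, a n ≤ b n := fun n => le_trans (ha2 n) (hbn n)
  have hsub : ∀ n, Ioc (a n) (b n) ⊆ Ioo 0 t := fun n s hs =>
    ⟨lt_trans (han n) hs.1, lt_of_le_of_lt hs.2 (hbt n)⟩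
  -- derivative of G
  have hderiv : ∀ x ∈ Ioo 0 t, HasDerivAt G (α * g x - β * h x) x := by
    intro x hx
    have hx0 : (0:ℝ) < x := hx.1
    have htx : (0:ℝ) < t - x := sub_pos.mpr hx.2
    have d1 : HasDerivAt (fun s : ℝ => t - s) (-1) x := (hasDerivAt_id x).const_sub t
    have d2 : HasDerivAt (fun s : ℝ => (t-s) ^ (-α)) ((-1) * (-α) * (t-x) ^ (-α-1)) x :=
      d1.rpow_const (Or.inl htx.ne')
    have d3 : HasDerivAt (fun s : ℝ => s ^ β) (β * x ^ (β-1)) x :=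
      Real.hasDerivAt_rpow_const (Or.inl hx0.ne')
    have d4 : HasDerivAt (fun s : ℝ => t ^ β - s ^ β) (-(β * x ^ (β-1))) x := d3.const_sub _
    have d5 : HasDerivAt (fun s : ℝ => (t-s) ^ (-α) * (t ^ β - s ^ β))
        ((-1) * (-α) * (t-x) ^ (-α-1) * (t ^ β - x ^ β) + (t-x) ^ (-α) * (-(β * x ^ (β-1)))) x :=
      d2.mul d4
    convert d5 using 1
    show α * ((t ^ β - x ^ β) * (t-x) ^ (-α-1)) - β * (x ^ (β-1) * (t-x) ^ (-α)) = _
    ring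
  -- FTC on subintervals
  have hftc : ∀ n, (α * ∫ s in Ioc (a n) (b n), g s) - (β * ∫ s in Ioc (a n) (b n), h s)
      = G (b n) - G (a n) := by
    intro n
    have hIcc : Set.uIcc (a n) (b n) ⊆ Ioo 0 t := by
      rw [Set.uIcc_of_le (hab n)]
      intro s hs
      exact ⟨lt_of_lt_of_le (han n) hs.1, lt_of_le_of_lt hs.2 (hbt n)⟩
    have hci : IntervalIntegrable (fun x => α * g x - β * h x) volume (a n) (b n) := by
      apply ContinuousOn.intervalIntegrable
      apply ContinuousOn.sub
      · exact (cont_on_g ht |>.mono hIcc).const_smul α |>.congr (fun x _ => rfl)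
      · exact (cont_on_h ht |>.mono hIcc).const_smul β |>.congr (fun x _ => rfl)
    have := intervalIntegral.integral_eq_sub_of_hasDerivAt
      (f := G) (f' := fun x => α * g x - β * h x)
      (fun x hx => hderiv x (hIcc hx)) hci
    rw [intervalIntegral.integral_of_le (hab n)] at this
    rw [← this]
    have hgi : IntegrableOn g (Ioc (a n) (b n)) :=
      (integrableOn_g hα0 hα1 hβ ht).mono_set (hsub n)
    have hhi : IntegrableOn h (Ioc (a n) (b n)) :=
      (integrableOn_h hα0 hα1 hβ ht).mono_set (hsub n)
    rw [MeasureTheory.integral_sub (hgi.const_mul α) (hhi.const_mul β),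
      MeasureTheory.integral_const_mul, MeasureTheory.integral_const_mul]
  -- monotone family
  have hmono : Monotone (fun n => Ioc (a n) (b n)) := by
    intro n m hnm
    apply Ioc_subset_Ioc
    · apply div_le_div_of_nonneg_left ht.le (by positivity)
      have : (n:ℝ) ≤ m := Nat.cast_le.mpr hnm
      linarith
    · have : a m ≤ a n := by
        apply div_le_div_of_nonneg_left ht.le (by positivity)
        have : (n:ℝ) ≤ m := Nat.cast_le.mpr hnm
        linarith
      simp only [hb]; linarith [this]
  have hU : (⋃ n, Ioc (a n) (b n)) = Ioo 0 t := by
    apply Set.Subset.antisymm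
    · exact Set.iUnion_subset hsub
    · intro s hs
      have hm : 0 < min s (t - s) := lt_min hs.1 (sub_pos.mpr hs.2)
      obtain ⟨n, hn⟩ := exists_nat_ge (t / min s (t-s))
      refine Set.mem_iUnion.mpr ⟨n, ?_, ?_⟩
      · have : a n < min s (t-s) := by
          rw [ha, div_lt_iff₀ (by positivity)]
          rw [div_le_iff₀ hm] at hn
          nlinarith [hm]
        exact lt_of_lt_of_le this (min_le_left _ _)
      · have : a n < min s (t-s) := by
          rw [ha, div_lt_iff₀ (by positivity)]
          rw [div_le_iff₀ hm] at hn
          nlinarith [hm]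
        have := lt_of_lt_of_le this (min_le_right _ _)
        simp only [hb]; linarith
  have haT : Tendsto a atTop (𝓝 0) := by
    have h0 : Tendsto (fun n : ℕ => ((n:ℝ)+2)) atTop atTop :=
      tendsto_atTop_add_const_right _ 2 tendsto_natCast_atTop_atTop
    exact Tendsto.div_atTop tendsto_const_nhds h0
  -- tendsto of set integrals
  have hTg : Tendsto (fun n => ∫ s in Ioc (a n) (b n), g s) atTop
      (𝓝 (∫ s in Ioo 0 t, g s)) := by
    have := MeasureTheory.tendsto_setIntegral_of_monotone
      (fun n => measurableSet_Ioc) hmono (hU ▸ integrableOn_g hα0 hα1 hβ ht)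
    rwa [hU] at this
  have hTh : Tendsto (fun n => ∫ s in Ioc (a n) (b n), h s) atTop
      (𝓝 (∫ s in Ioo 0 t, h s)) := by
    have := MeasureTheory.tendsto_setIntegral_of_monotone
      (fun n => measurableSet_Ioc) hmono (hU ▸ integrableOn_h hα0 hα1 hβ ht)
    rwa [hU] at this
  -- limits of G at endpoints
  have hGa : Tendsto (fun n => G (a n)) atTop (𝓝 (t ^ (β-α))) := by
    have hc : ContinuousAt G 0 := by
      apply ContinuousAt.mul
      · exact ((continuousAt_const.sub continuousAt_id).rpow_const (Or.inl (by simpa using ht.ne')))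
      · exact continuousAt_const.sub (Real.continuousAt_rpow_const 0 β (Or.inr hβ.le))
    have := hc.tendsto.comp haT
    have hG0 : G 0 = t ^ (β-α) := by
      simp only [hG, sub_zero, Real.zero_rpow hβ.ne']
      rw [← Real.rpow_add ht]
      congr 1
      ring
    rwa [hG0] at this
  have hGb : Tendsto (fun n => G (b n)) atTop (𝓝 0) := by
    set L : ℝ := β * max ((t/2) ^ (β-1)) (t ^ (β-1)) with hL
    have hLpos : 0 ≤ L := by
      apply mul_nonneg hβ.le
      exact le_trans (Real.rpow_nonneg (by linarith) _) (le_max_left _ _)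
    have hGnn : ∀ n, 0 ≤ G (b n) := by
      intro n
      have hb0 : (0:ℝ) ≤ b n := le_trans (by linarith : (0:ℝ) ≤ t/2) (hbn n)
      have htb0 : (0:ℝ) ≤ t - b n := by linarith [hbt n]
      apply mul_nonneg (Real.rpow_nonneg htb0 _)
      have := Real.rpow_le_rpow hb0 (hbt n).le hβ.le
      linarith
    have hGle : ∀ n, G (b n) ≤ L * (a n) ^ (1-α) := by
      intro n
      have htb : t - b n = a n := by simp only [hb]; ring
      have h1 : t ^ β - (b n) ^ β ≤ L * a n := by
        calc t ^ β - (b n) ^ β ≤ β * max ((b n) ^ (β-1)) (t ^ (β-1)) * (t - b n) :=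
              rpow_sub_rpow_le hβ (by linarith [hbn n]) (hbt n).le
          _ ≤ L * (t - b n) := by
              apply mul_le_mul_of_nonneg_right _ (by linarith [hbt n])
              exact mul_le_mul_of_nonneg_left (max_rpow_bound hβ ht (hbn n) (hbt n).le) hβ.le
          _ = L * a n := by rw [htb]
      calc G (b n) = (a n) ^ (-α) * (t ^ β - (b n) ^ β) := by rw [hG]; simp only [htb]
        _ ≤ (a n) ^ (-α) * (L * a n) := by
            apply mul_le_mul_of_nonneg_left h1 (Real.rpow_nonneg (han n).le _)
        _ = L * ((a n) * (a n) ^ (-α)) := by ring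
        _ = L * (a n) ^ (1-α) := by
            rw [show (1:ℝ)-α = 1 + (-α) by ring,
              Real.rpow_one_add' (han n).le (by linarith)]
    have hT : Tendsto (fun n => L * (a n) ^ (1-α)) atTop (𝓝 0) := by
      have h1 : Tendsto (fun n => (a n) ^ (1-α)) atTop (𝓝 0) := by
        have hc := (Real.continuousAt_rpow_const 0 (1-α) (Or.inr (by linarith))).tendsto.comp haT
        rwa [Real.zero_rpow (by linarith : (1:ℝ)-α ≠ 0)] at hc
      simpa using h1.const_mul L
    exact squeeze_zero hGnn hGle hT
  -- combine
  have hcomb : Tendsto (fun n => (α * ∫ s in Ioc (a n) (b n), g s)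
      - (β * ∫ s in Ioc (a n) (b n), h s)) atTop
      (𝓝 ((α * ∫ s in Ioo 0 t, g s) - (β * ∫ s in Ioo 0 t, h s))) :=
    Tendsto.sub (hTg.const_mul α) (hTh.const_mul β)
  have hcomb2 : Tendsto (fun n => G (b n) - G (a n)) atTop (𝓝 (0 - t ^ (β-α))) :=
    Tendsto.sub hGb hGa
  have heq : (α * ∫ s in Ioo 0 t, g s) - (β * ∫ s in Ioo 0 t, h s) = 0 - t ^ (β-α) := by
    apply tendsto_nhds_unique _ hcomb2
    exact hcomb.congr (fun n => (hftc n))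
  rw [betaInt_val hα0 hα1 hβ ht] at heq
  have hΓpos : 0 < Real.Gamma (β+1-α) := Real.Gamma_pos_of_pos (by linarith)
  have hGadd : Real.Gamma (β+1) = β * Real.Gamma β := by
    rw [Real.Gamma_add_one hβ.ne']
  rw [hGadd]
  have : α * ∫ s in Ioo 0 t, g s =
      β * (t ^ (β-α) * (Real.Gamma β * Real.Gamma (1-α) / Real.Gamma (β+1-α))) - t ^ (β-α) := by
    linarith [heq]
  rw [this]
  field_simp
end KI

noncomputable def mlP (α y : ℝ) : ℝ := ∑' k : ℕ, (-y)^k * (Real.Gamma (α*k+1))⁻¹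

noncomputable def mlu (α s : ℝ) : ℝ := mlP α (s ^ α)

section ML
variable {α : ℝ} (hα0 : 0 < α) (hα1 : α < 1)

lemma gamma_k_pos (k : ℕ) (hα0 : 0 < α) : 0 < Real.Gamma (α*k+1) :=
  Real.Gamma_pos_of_pos (by positivity)

lemma summable_mlP (hα0 : 0 < α) (y : ℝ) :
    Summable (fun k : ℕ => (-y)^k * (Real.Gamma (α*k+1))⁻¹) := by
  apply Summable.of_abs
  have : ∀ k : ℕ, |(-y)^k * (Real.Gamma (α*k+1))⁻¹| = |y|^k * (Real.Gamma (α*k+1))⁻¹ := by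
    intro k
    rw [abs_mul, abs_pow, abs_neg, abs_of_nonneg (by positivity :
      (0:ℝ) ≤ (Real.Gamma (α*k+1))⁻¹)]
  · rw [funext this]
    exact summable_inv_gamma hα0 one_pos (abs_nonneg y)

lemma summable_k_mul (hα0 : 0 < α) {δ : ℝ} (hδ : 0 < δ) {x : ℝ} (hx : 0 ≤ x) :
    Summable (fun k : ℕ => (k:ℝ) * x ^ k * (Real.Gamma (α*k+δ))⁻¹) := by
  apply Summable.of_nonneg_of_le (fun k => by positivity)
    (fun k => ?_) (summable_inv_gamma hα0 hδ (by linarith : (0:ℝ) ≤ 2*x))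
  have h1 : (k:ℝ) * x ^ k ≤ (2*x) ^ k := by
    calc (k:ℝ) * x ^ k ≤ (2:ℝ)^k * x ^ k := by
          apply mul_le_mul_of_nonneg_right _ (by positivity)
          exact_mod_cast (Nat.lt_two_pow_self (n := k)).le
      _ = (2*x)^k := by rw [mul_pow]
  exact mul_le_mul_of_nonneg_right h1 (by positivity)

lemma mlP_zero (hα0 : 0 < α) : mlP α 0 = 1 := by
  rw [mlP]
  rw [tsum_eq_single 0 (fun k hk => by
    simp [zero_pow hk])]
  simp [Real.Gamma_one]

lemma mlu_zero (hα0 : 0 < α) : mlu α 0 = 1 := by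
  rw [mlu, Real.zero_rpow hα0.ne', mlP_zero hα0]

lemma abs_mlP_le (hα0 : 0 < α) {y Y : ℝ} (hy : |y| ≤ Y) :
    |mlP α y| ≤ ∑' k : ℕ, Y ^ k * (Real.Gamma (α*k+1))⁻¹ := by
  have hY : 0 ≤ Y := le_trans (abs_nonneg y) hy
  rw [mlP, ← Real.norm_eq_abs]
  apply le_trans (norm_tsum_le_tsum_norm ?_)
  · apply Summable.tsum_le_tsum _ ((summable_mlP hα0 y).abs) (summable_inv_gamma hα0 one_pos hY)
    intro k
    rw [abs_mul, abs_pow, abs_neg,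
      abs_of_nonneg (by positivity : (0:ℝ) ≤ (Real.Gamma (α*k+1))⁻¹)]
    exact mul_le_mul_of_nonneg_right (pow_le_pow_left₀ (abs_nonneg y) hy k) (by positivity)
  · exact (summable_mlP hα0 y).abs

lemma continuous_mlP (hα0 : 0 < α) : Continuous (mlP α) := by
  rw [← continuousOn_univ]
  have : ∀ R : ℝ, 0 ≤ R → ContinuousOn (mlP α) (Icc (-R) R) := by
    intro R hR
    have heq : mlP α = fun y : ℝ => ∑' k : ℕ, (-y)^k * (Real.Gamma (α*(k:ℕ)+1))⁻¹ := rfl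
    rw [heq]
    apply continuousOn_tsum
      (f := fun (k:ℕ) (y:ℝ) => (-y)^k * (Real.Gamma (α*(k:ℕ)+1))⁻¹)
      (u := fun k : ℕ => R ^ k * (Real.Gamma (α*k+1))⁻¹)
    · intro k
      apply ContinuousOn.mul _ continuousOn_const
      exact (continuous_pow k).comp continuous_neg |>.continuousOn
    · exact summable_inv_gamma hα0 one_pos hR
    · intro k y hy
      rw [Real.norm_eq_abs, abs_mul, abs_pow, abs_neg,
        abs_of_nonneg (by positivity : (0:ℝ) ≤ (Real.Gamma (α*k+1))⁻¹)]
      apply mul_le_mul_of_nonneg_right _ (by positivity)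
      exact pow_le_pow_left₀ (abs_nonneg y) (abs_le.mpr ⟨hy.1, hy.2⟩) k
  intro y _
  have hy : y ∈ Icc (-(|y|+1)) (|y|+1) := by
    constructor <;> [linarith [neg_abs_le y]; linarith [le_abs_self y]]
  exact ((this (|y|+1) (by positivity)).continuousAt
    (Icc_mem_nhds (by linarith [neg_abs_le y, abs_nonneg y])
      (by linarith [le_abs_self y]))).continuousWithinAt

lemma continuous_mlu (hα0 : 0 < α) : Continuous (mlu α) := by
  apply (continuous_mlP hα0).comp
  have : ∀ x : ℝ, ContinuousAt (fun s : ℝ => s ^ α) x := by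
    intro x
    rcases eq_or_ne x 0 with rfl | hx
    · exact Real.continuousAt_rpow_const 0 α (Or.inr hα0.le)
    · exact Real.continuousAt_rpow_const x α (Or.inl hx)
  exact continuous_iff_continuousAt.mpr this

end ML



section CaputoU
variable {α t : ℝ}

lemma rpow_mul_nat {x : ℝ} (hx : 0 ≤ x) (k : ℕ) : x ^ (α*(k:ℝ)) = (x^α)^k := by
  rw [Real.rpow_mul hx, Real.rpow_natCast]

lemma mlu_series (hα0 : 0 < α) {x : ℝ} (hx : 0 < x) :
    mlu α x = ∑' k : ℕ, (-1:ℝ)^k * (x ^ (α*(k:ℝ)) * (Real.Gamma (α*k+1))⁻¹) := by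
  rw [mlu, mlP]
  exact tsum_congr (fun k => by rw [neg_pow, rpow_mul_nat hx.le]; ring)

lemma summable_mlu_series (hα0 : 0 < α) {x : ℝ} (hx : 0 < x) :
    Summable (fun k : ℕ => (-1:ℝ)^k * (x ^ (α*(k:ℝ)) * (Real.Gamma (α*k+1))⁻¹)) := by
  have := summable_mlP hα0 (x^α)
  apply this.congr
  intro k
  rw [neg_pow, rpow_mul_nat hx.le]; ring

lemma rpow_sub_alpha (ht : 0 < t) (k : ℕ) :
    t ^ (α*(k:ℝ)-α) = t ^ (-α) * (t^α)^k := by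
  rw [show α*(k:ℝ)-α = -α + α*(k:ℝ) by ring, Real.rpow_add ht, rpow_mul_nat ht.le]

lemma summable_signed (hα0 : 0 < α) {δ : ℝ} (hδ : 0 < δ) (ht : 0 < t) :
    Summable (fun k : ℕ => (-1:ℝ)^k * (t ^ (α*(k:ℝ)-α) * (Real.Gamma (α*k+δ))⁻¹)) := by
  apply Summable.of_abs
  have h := (summable_inv_gamma hα0 hδ (Real.rpow_nonneg ht.le α)).mul_left (t ^ (-α))
  apply h.congr
  intro k
  rw [abs_mul, abs_pow, abs_neg, abs_one, one_pow, one_mul, abs_mul,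
    abs_of_nonneg (Real.rpow_nonneg ht.le _),
    abs_of_nonneg (by positivity : (0:ℝ) ≤ (Real.Gamma (α*k+δ))⁻¹),
    rpow_sub_alpha ht]
  ring

/-- Lipschitz-type bound for `mlu` on `[t/2, t]`. -/
lemma mlu_lip (hα0 : 0 < α) (ht : 0 < t) :
    ∃ M : ℝ, 0 ≤ M ∧ ∀ s : ℝ, t/2 ≤ s → s ≤ t → |mlu α t - mlu α s| ≤ M * (t - s) := by
  have ht2 : (0:ℝ) < t/2 := by linarith
  have htα : (0:ℝ) ≤ t^α := Real.rpow_nonneg ht.le α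
  set m : ℕ → ℝ := fun k => (α*(k:ℝ)) * ((2/t) * (1 + (t^α)^k)) * (Real.Gamma (α*k+1))⁻¹
    with hm
  have hmsum : Summable m := by
    have h1 : Summable (fun k : ℕ => (k:ℝ) * (1:ℝ) ^ k * (Real.Gamma (α*(k:ℝ)+1))⁻¹) :=
      summable_k_mul hα0 one_pos (by norm_num : (0:ℝ) ≤ 1)
    have h2 : Summable (fun k : ℕ => (k:ℝ) * (t^α) ^ k * (Real.Gamma (α*(k:ℝ)+1))⁻¹) :=
      summable_k_mul hα0 one_pos htα
    have h3 := (h1.mul_left (2*α/t)).add (h2.mul_left (2*α/t))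
    apply h3.congr
    intro k
    simp only [hm, one_pow]
    ring
  refine ⟨∑' k, m k, tsum_nonneg (fun k => by positivity), ?_⟩
  intro s hs2 hst
  have hs0 : (0:ℝ) < s := lt_of_lt_of_le ht2 hs2
  set dk : ℕ → ℝ := fun k => (-1:ℝ)^k * (t ^ (α*(k:ℝ)) * (Real.Gamma (α*k+1))⁻¹)
      - (-1:ℝ)^k * (s ^ (α*(k:ℝ)) * (Real.Gamma (α*k+1))⁻¹) with hdkdef
  have hdk : mlu α t - mlu α s = ∑' k : ℕ, dk k := by
    rw [mlu_series hα0 ht, mlu_series hα0 hs0]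
    exact (Summable.tsum_sub (summable_mlu_series hα0 ht) (summable_mlu_series hα0 hs0)).symm
  rw [hdk]
  have habs : ∀ k : ℕ, |dk k| ≤ m k * (t - s) := by
    intro k
    have hγpos : (0:ℝ) < Real.Gamma (α*k+1) := Real.Gamma_pos_of_pos (by positivity)
    rcases Nat.eq_zero_or_pos k with rfl | hk
    · simp [hdkdef, hm]
    have hβk : (0:ℝ) < α*(k:ℝ) := by positivity
    have e1 : |dk k| = (t ^ (α*(k:ℝ)) - s ^ (α*(k:ℝ))) * (Real.Gamma (α*k+1))⁻¹ := by
      have hmono := Real.rpow_le_rpow hs0.le hst (le_of_lt hβk)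
      simp only [hdkdef]
      rw [
        show (-1:ℝ)^k * (t ^ (α*(k:ℝ)) * (Real.Gamma (α*k+1))⁻¹)
          - (-1:ℝ)^k * (s ^ (α*(k:ℝ)) * (Real.Gamma (α*k+1))⁻¹)
          = (-1:ℝ)^k * ((t ^ (α*(k:ℝ)) - s ^ (α*(k:ℝ))) * (Real.Gamma (α*k+1))⁻¹) by ring,
        abs_mul, abs_pow, abs_neg, abs_one, one_pow, one_mul,
        abs_of_nonneg (mul_nonneg (by linarith) (by positivity))]
    rw [e1]
    -- bound the two rpow's at exponent (α k - 1)
    have htb : t ^ (α*(k:ℝ)-1) ≤ (2/t) * (1 + (t^α)^k) := by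
      have e : t ^ (α*(k:ℝ)-1) = (t^α)^k / t := by
        rw [show α*(k:ℝ)-1 = α*(k:ℝ)+(-1) by ring, Real.rpow_add ht,
          Real.rpow_neg_one, rpow_mul_nat ht.le, div_eq_mul_inv]
      rw [e, div_le_iff₀ ht, show (2/t) * (1 + (t^α)^k) * t = 2*(1+(t^α)^k) by
        field_simp]
      nlinarith [pow_nonneg htα k]
    have hsb : s ^ (α*(k:ℝ)-1) ≤ (2/t) * (1 + (t^α)^k) := by
      rcases le_or_gt 1 (α*(k:ℝ)) with hβk1 | hβk1
      · exact le_trans (Real.rpow_le_rpow hs0.le hst (by linarith)) htb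
      · have h5 : s ^ (α*(k:ℝ)-1) ≤ (t/2) ^ (α*(k:ℝ)-1) :=
          Real.rpow_le_rpow_of_nonpos ht2 hs2 (by linarith)
        have e : (t/2) ^ (α*(k:ℝ)-1) = (t/2) ^ (α*(k:ℝ)) * (2/t) := by
          rw [show α*(k:ℝ)-1 = α*(k:ℝ)+(-1) by ring, Real.rpow_add ht2,
            Real.rpow_neg_one, inv_div]
        have h6 : (t/2) ^ (α*(k:ℝ)) ≤ 1 + (t^α)^k := by
          rcases le_or_gt (t/2) 1 with hc | hc
          · have := Real.rpow_le_one ht2.le hc hβk.le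
            have : (0:ℝ) ≤ (t^α)^k := pow_nonneg htα k
            linarith [Real.rpow_le_one ht2.le hc hβk.le]
          · have h7 : (t/2) ^ (α*(k:ℝ)) ≤ t ^ (α*(k:ℝ)) :=
              Real.rpow_le_rpow ht2.le (by linarith) hβk.le
            rw [rpow_mul_nat ht.le] at h7
            linarith
        calc s ^ (α*(k:ℝ)-1) ≤ (t/2) ^ (α*(k:ℝ)-1) := h5
          _ = (t/2) ^ (α*(k:ℝ)) * (2/t) := e
          _ ≤ (1 + (t^α)^k) * (2/t) :=
              mul_le_mul_of_nonneg_right h6 (by positivity)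
          _ = (2/t) * (1 + (t^α)^k) := by ring
    have h4 : max (s ^ (α*(k:ℝ)-1)) (t ^ (α*(k:ℝ)-1)) ≤ (2/t) * (1 + (t^α)^k) :=
      max_le hsb htb
    have h2 : t ^ (α*(k:ℝ)) - s ^ (α*(k:ℝ))
        ≤ (α*(k:ℝ)) * ((2/t) * (1 + (t^α)^k)) * (t-s) := by
      calc t ^ (α*(k:ℝ)) - s ^ (α*(k:ℝ))
          ≤ (α*(k:ℝ)) * max (s ^ (α*(k:ℝ)-1)) (t ^ (α*(k:ℝ)-1)) * (t-s) :=
            rpow_sub_rpow_le hβk hs0 hst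
        _ ≤ (α*(k:ℝ)) * ((2/t) * (1 + (t^α)^k)) * (t-s) := by
            apply mul_le_mul_of_nonneg_right _ (by linarith)
            exact mul_le_mul_of_nonneg_left h4 (by positivity)
    calc (t ^ (α*(k:ℝ)) - s ^ (α*(k:ℝ))) * (Real.Gamma (α*k+1))⁻¹
        ≤ ((α*(k:ℝ)) * ((2/t) * (1 + (t^α)^k)) * (t-s)) * (Real.Gamma (α*k+1))⁻¹ :=
          mul_le_mul_of_nonneg_right h2 (by positivity)
      _ = m k * (t - s) := by rw [hm]; ring
  have hsum2 : Summable (fun k => |dk k|) :=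
    Summable.of_nonneg_of_le (fun k => abs_nonneg _) habs (hmsum.mul_right _)
  rw [← Real.norm_eq_abs]
  apply le_trans (norm_tsum_le_tsum_norm (by simpa [Real.norm_eq_abs] using hsum2))
  calc ∑' k, ‖dk k‖ ≤ ∑' k, m k * (t-s) := by
        apply Summable.tsum_le_tsum _ (by simpa [Real.norm_eq_abs] using hsum2) (hmsum.mul_right _)
        intro k
        rw [Real.norm_eq_abs]
        exact habs k
    _ = (∑' k, m k) * (t-s) := tsum_mul_right
lemma mlu_bdd (hα0 : 0 < α) (ht : 0 < t) {x : ℝ} (hx0 : 0 ≤ x) (hxt : x ≤ t) :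
    |mlu α x| ≤ ∑' k : ℕ, (t^α) ^ k * (Real.Gamma (α*k+1))⁻¹ := by
  rw [mlu]
  apply abs_mlP_le hα0
  rw [abs_of_nonneg (Real.rpow_nonneg hx0 α)]
  exact Real.rpow_le_rpow hx0 hxt hα0.le

lemma cont_on_ker (hα0 : 0 < α) (ht : 0 < t) :
    ContinuousOn (fun s : ℝ => (t-s) ^ (-α-1)) (Ioo 0 t) := by
  intro x hx
  apply ContinuousAt.continuousWithinAt
  have : ContinuousAt (fun s : ℝ => t - s) x := continuousAt_const.sub continuousAt_id
  exact (Real.continuousAt_rpow_const (t-x) (-α-1)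
    (Or.inl (sub_pos.mpr hx.2).ne')).comp this

lemma caputo_integrable (hα0 : 0 < α) (hα1 : α < 1) (ht : 0 < t) :
    IntegrableOn (fun s : ℝ => (mlu α t - mlu α s) * (t-s) ^ (-α-1)) (Ioo 0 t) := by
  obtain ⟨M, hM0, hM⟩ := mlu_lip hα0 ht
  have ht2 : (0:ℝ) < t/2 := by linarith
  set Mt : ℝ := ∑' k : ℕ, (t^α) ^ k * (Real.Gamma (α*k+1))⁻¹ with hMt
  have hMt0 : 0 ≤ Mt := tsum_nonneg (fun k => by
    have := Real.rpow_nonneg ht.le α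
    positivity)
  have hmaj : IntegrableOn (fun s : ℝ => 2*Mt*(t/2)^(-α-1) + M * (t-s)^(-α)) (Ioo 0 t) := by
    apply Integrable.add
    · exact integrableOn_const measure_Ioo_lt_top.ne
    · exact (integrableOn_sub_rpow hα1 ht).const_mul M
  apply Integrable.mono' hmaj
  · apply ContinuousOn.aestronglyMeasurable _ measurableSet_Ioo
    exact (continuous_const.sub (continuous_mlu hα0)).continuousOn.mul (cont_on_ker hα0 ht)
  filter_upwards [ae_restrict_mem measurableSet_Ioo] with s hs
  have hts : (0:ℝ) < t - s := sub_pos.mpr hs.2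
  rw [Real.norm_eq_abs, abs_mul, abs_of_nonneg (Real.rpow_nonneg hts.le _)]
  rcases le_or_gt s (t/2) with hc | hc
  · have h1 : (t-s) ^ (-α-1) ≤ (t/2) ^ (-α-1) :=
      Real.rpow_le_rpow_of_nonpos ht2 (by linarith) (by linarith)
    have h2 : |mlu α t - mlu α s| ≤ 2*Mt := by
      calc |mlu α t - mlu α s| ≤ |mlu α t| + |mlu α s| := abs_sub _ _
        _ ≤ Mt + Mt := add_le_add (mlu_bdd hα0 ht ht.le le_rfl)
            (mlu_bdd hα0 ht hs.1.le hs.2.le)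
        _ = 2*Mt := by ring
    have h3 : (0:ℝ) ≤ M * (t-s)^(-α) := mul_nonneg hM0 (Real.rpow_nonneg hts.le _)
    calc |mlu α t - mlu α s| * (t-s) ^ (-α-1) ≤ (2*Mt) * (t/2) ^ (-α-1) := by
          apply mul_le_mul h2 h1 (Real.rpow_nonneg hts.le _) (by linarith)
      _ ≤ 2*Mt*(t/2)^(-α-1) + M * (t-s)^(-α) := by linarith
  · have h1 : |mlu α t - mlu α s| ≤ M * (t-s) := hM s hc.le hs.2.le
    have h2 : (t-s) * (t-s) ^ (-α-1) = (t-s) ^ (-α) := by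
      rw [show (-α:ℝ) = 1 + (-α-1) by ring, Real.rpow_one_add' hts.le (by linarith)]
      norm_num
    have h3 : (0:ℝ) ≤ 2*Mt*(t/2)^(-α-1) := by positivity
    calc |mlu α t - mlu α s| * (t-s) ^ (-α-1) ≤ (M * (t-s)) * (t-s) ^ (-α-1) :=
          mul_le_mul_of_nonneg_right h1 (Real.rpow_nonneg hts.le _)
      _ = M * (t-s) ^ (-α) := by rw [mul_assoc, h2]
      _ ≤ 2*Mt*(t/2)^(-α-1) + M * (t-s)^(-α) := by linarith

lemma caputo_eq (hα0 : 0 < α) (hα1 : α < 1) (ht : 0 < t) :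
    t ^ (-α) * (mlu α t - 1) +
      α * ∫ s in Ioo 0 t, (mlu α t - mlu α s) * (t-s) ^ (-α-1)
      = -(Real.Gamma (1-α) * mlu α t) := by
  have hΓ1α : (0:ℝ) < Real.Gamma (1-α) := Real.Gamma_pos_of_pos (by linarith)
  set F : ℕ → ℝ → ℝ := fun k s => ((-1:ℝ))^k * (Real.Gamma (α*(k:ℝ)+1))⁻¹ *
    ((t ^ (α*(k:ℝ)) - s ^ (α*(k:ℝ))) * (t-s) ^ (-α-1)) with hF
  -- pointwise expansion
  have hpt : ∀ s ∈ Ioo (0:ℝ) t, (mlu α t - mlu α s) * (t-s) ^ (-α-1) = ∑' k, F k s := by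
    intro s hs
    have hdk : mlu α t - mlu α s = ∑' k : ℕ,
        ((-1:ℝ)^k * (t ^ (α*(k:ℝ)) * (Real.Gamma (α*(k:ℝ)+1))⁻¹)
        - (-1:ℝ)^k * (s ^ (α*(k:ℝ)) * (Real.Gamma (α*(k:ℝ)+1))⁻¹)) := by
      rw [mlu_series hα0 ht, mlu_series hα0 hs.1]
      exact (Summable.tsum_sub (summable_mlu_series hα0 ht) (summable_mlu_series hα0 hs.1)).symm
    rw [hdk, ← tsum_mul_right]
    exact tsum_congr (fun k => by rw [hF]; ring)
  -- integrability of each term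
  have hFint : ∀ k : ℕ, IntegrableOn (F k) (Ioo 0 t) := by
    intro k
    rcases Nat.eq_zero_or_pos k with rfl | hk
    · have : F 0 = fun s : ℝ => 0 := by
        funext s
        simp [hF]
      rw [this]
      exact integrableOn_zero
    · have hβk : (0:ℝ) < α*(k:ℝ) := by positivity
      exact (integrableOn_g hα0 hα1 hβk ht).const_mul _
  have hFmeas : ∀ k : ℕ, AEStronglyMeasurable (F k) (volume.restrict (Ioo 0 t)) :=
    fun k => (hFint k).aestronglyMeasurable
  -- norm values
  set c : ℕ → ℝ := fun k => α⁻¹ * (Real.Gamma (1-α) *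
      (t^(α*(k:ℝ)-α) * (Real.Gamma (α*(k:ℝ)+1-α))⁻¹)
      - t^(α*(k:ℝ)-α) * (Real.Gamma (α*(k:ℝ)+1))⁻¹) with hc
  have hgamma_pos : ∀ k : ℕ, (0:ℝ) < Real.Gamma (α*(k:ℝ)+1) :=
    fun k => Real.Gamma_pos_of_pos (by positivity)
  have hgamma1_pos : ∀ k : ℕ, (0:ℝ) < Real.Gamma (α*(k:ℝ)+1-α) :=
    fun k => Real.Gamma_pos_of_pos (by nlinarith [Nat.cast_nonneg (α := ℝ) k, hα0.le])
  have hczero : c 0 = 0 := by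
    simp only [hc, Nat.cast_zero, mul_zero, zero_sub, zero_add, Real.Gamma_one, inv_one,
      mul_one]
    rw [mul_comm (Real.Gamma (1-α)), mul_assoc, inv_mul_cancel₀ hΓ1α.ne', mul_one]
    ring
  have hIval : ∀ k : ℕ, α * ∫ s in Ioo 0 t, F k s =
      (-1:ℝ)^k * (Real.Gamma (1-α) * (t^(α*(k:ℝ)-α) * (Real.Gamma (α*(k:ℝ)+1-α))⁻¹)
        - t^(α*(k:ℝ)-α) * (Real.Gamma (α*(k:ℝ)+1))⁻¹) := by
    intro k
    rcases Nat.eq_zero_or_pos k with rfl | hk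
    · have h0 : F 0 = fun s : ℝ => 0 := by funext s; simp [hF]
      rw [h0]
      simp only [MeasureTheory.integral_zero, mul_zero, Nat.cast_zero, pow_zero, one_mul]
      rw [show (0:ℝ)+1-α = 1-α by ring, show (0:ℝ)-α = -α by ring,
        show (0:ℝ)+1 = (1:ℝ) by ring, Real.Gamma_one,
        mul_comm (Real.Gamma (1-α)), mul_assoc, inv_mul_cancel₀ hΓ1α.ne', mul_one, inv_one,
        mul_one]
      ring
    · have hβk : (0:ℝ) < α*(k:ℝ) := by positivity
      have hKI := key_integral hα0 hα1 hβk ht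
      have e1 : ∫ s in Ioo 0 t, F k s = ((-1:ℝ)^k * (Real.Gamma (α*(k:ℝ)+1))⁻¹) *
          ∫ s in Ioo 0 t, (t ^ (α*(k:ℝ)) - s ^ (α*(k:ℝ))) * (t-s) ^ (-α-1) := by
        rw [← MeasureTheory.integral_const_mul]
      rw [e1, show α * (((-1:ℝ)^k * (Real.Gamma (α*(k:ℝ)+1))⁻¹) * _) =
        ((-1:ℝ)^k * (Real.Gamma (α*(k:ℝ)+1))⁻¹) *
          (α * ∫ s in Ioo 0 t, (t ^ (α*(k:ℝ)) - s ^ (α*(k:ℝ))) * (t-s) ^ (-α-1)) by ring,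
        hKI]
      have hg1 : Real.Gamma (α*(k:ℝ)+1) ≠ 0 := (hgamma_pos k).ne'
      have hg2 : Real.Gamma (α*(k:ℝ)+1-α) ≠ 0 := (hgamma1_pos k).ne'
      field_simp
  -- the ℒ¹ norms
  have hcval : ∀ k : ℕ, ∫ s in Ioo 0 t, ‖F k s‖ = c k := by
    intro k
    rcases Nat.eq_zero_or_pos k with rfl | hk
    · have h0 : F 0 = fun s : ℝ => 0 := by funext s; simp [hF]
      rw [h0, hczero]
      simp
    · have hβk : (0:ℝ) < α*(k:ℝ) := by positivity
      have e1 : ∀ s ∈ Ioo (0:ℝ) t, ‖F k s‖ = (Real.Gamma (α*(k:ℝ)+1))⁻¹ *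
          ((t ^ (α*(k:ℝ)) - s ^ (α*(k:ℝ))) * (t-s) ^ (-α-1)) := by
        intro s hs
        rw [hF, Real.norm_eq_abs, abs_mul, abs_mul, abs_pow, abs_neg, abs_one, one_pow,
          one_mul, abs_of_nonneg (by positivity : (0:ℝ) ≤ (Real.Gamma (α*(k:ℝ)+1))⁻¹),
          abs_of_nonneg (g_nonneg hβk hs)]
      rw [MeasureTheory.setIntegral_congr_fun measurableSet_Ioo e1,
        MeasureTheory.integral_const_mul]
      have hKI := key_integral hα0 hα1 hβk ht
      have : ∫ s in Ioo 0 t, (t ^ (α*(k:ℝ)) - s ^ (α*(k:ℝ))) * (t-s) ^ (-α-1)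
          = α⁻¹ * (t ^ (α*(k:ℝ)-α) * (Real.Gamma (1-α) * Real.Gamma (α*(k:ℝ)+1) /
            Real.Gamma (α*(k:ℝ)+1-α) - 1)) := by
        rw [← hKI]
        field_simp
      rw [this, hc]
      have hg1 : Real.Gamma (α*(k:ℝ)+1) ≠ 0 := (hgamma_pos k).ne'
      have hg2 : Real.Gamma (α*(k:ℝ)+1-α) ≠ 0 := (hgamma1_pos k).ne'
      field_simp
  have hcnn : ∀ k : ℕ, 0 ≤ c k := by
    intro k
    rw [← hcval k]
    exact MeasureTheory.integral_nonneg (fun s => norm_nonneg _)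
  have hcsum : Summable c := by
    have hs1 := ((summable_inv_gamma hα0 (by linarith : (0:ℝ) < 1-α)
      (Real.rpow_nonneg ht.le α)).mul_left (α⁻¹ * Real.Gamma (1-α) * t^(-α)))
    have hs2 := ((summable_inv_gamma hα0 one_pos
      (Real.rpow_nonneg ht.le α)).mul_left (α⁻¹ * t^(-α)))
    apply (hs1.sub hs2).congr
    intro k
    simp only [hc]
    rw [rpow_sub_alpha ht, show α*(k:ℝ)+1-α = α*(k:ℝ)+(1-α) by ring]
    ring
  -- interchange sum and integral
  have hswap : ∫ s in Ioo 0 t, (mlu α t - mlu α s) * (t-s) ^ (-α-1)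
      = ∑' k, ∫ s in Ioo 0 t, F k s := by
    rw [MeasureTheory.setIntegral_congr_fun measurableSet_Ioo hpt]
    apply MeasureTheory.integral_tsum hFmeas
    have hlint : ∀ k : ℕ, ∫⁻ s in Ioo 0 t, ‖F k s‖₊ = ENNReal.ofReal (c k) := by
      intro k
      rw [← hcval k, MeasureTheory.ofReal_integral_eq_lintegral_ofReal (hFint k).norm
        (Filter.Eventually.of_forall (fun s => norm_nonneg _))]
      apply lintegral_congr
      intro s
      exact (ENNReal.ofReal_eq_coe_nnreal (norm_nonneg _)).symm
    have heq : ∑' k : ℕ, ∫⁻ s in Ioo 0 t, ‖F k s‖₊ = ENNReal.ofReal (∑' k, c k) := by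
      rw [tsum_congr hlint, ← ENNReal.ofReal_tsum_of_nonneg hcnn hcsum]
    rw [show (∑' k : ℕ, ∫⁻ s in Ioo 0 t, ‖F k s‖ₑ) = _ from heq]
    exact ENNReal.ofReal_ne_top
  -- summability of the signed series
  have hs1 : Summable (fun k : ℕ => (-1:ℝ)^k *
      (t^(α*(k:ℝ)-α) * (Real.Gamma (α*(k:ℝ)+1-α))⁻¹)) := by
    apply (summable_signed hα0 (by linarith : (0:ℝ) < 1-α) ht).congr
    intro k
    rw [show α*(k:ℝ)+(1-α) = α*(k:ℝ)+1-α by ring]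
  have hs2 : Summable (fun k : ℕ => (-1:ℝ)^k *
      (t^(α*(k:ℝ)-α) * (Real.Gamma (α*(k:ℝ)+1))⁻¹)) :=
    summable_signed hα0 one_pos ht
  -- evaluate the two series
  have hS2 : ∑' k : ℕ, (-1:ℝ)^k * (t^(α*(k:ℝ)-α) * (Real.Gamma (α*(k:ℝ)+1))⁻¹)
      = t^(-α) * mlu α t := by
    rw [mlu_series hα0 ht, ← tsum_mul_left]
    exact tsum_congr (fun k => by rw [rpow_sub_alpha ht, rpow_mul_nat ht.le]; ring)
  have hS1 : ∑' k : ℕ, (-1:ℝ)^k * (t^(α*(k:ℝ)-α) * (Real.Gamma (α*(k:ℝ)+1-α))⁻¹)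
      = t^(-α) * (Real.Gamma (1-α))⁻¹ - mlu α t := by
    rw [Summable.tsum_eq_zero_add hs1]
    have hshift : ∀ k : ℕ, (-1:ℝ)^(k+1) *
        (t^(α*((k+1:ℕ):ℝ)-α) * (Real.Gamma (α*((k+1:ℕ):ℝ)+1-α))⁻¹)
        = -((-1:ℝ)^k * (t^(α*(k:ℝ)) * (Real.Gamma (α*(k:ℝ)+1))⁻¹)) := by
      intro k
      have e1 : α*((k+1:ℕ):ℝ)-α = α*(k:ℝ) := by push_cast; ring
      have e2 : α*((k+1:ℕ):ℝ)+1-α = α*(k:ℝ)+1 := by push_cast; ring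
      rw [e1, e2, pow_succ]
      ring
    rw [tsum_congr hshift, tsum_neg, mlu_series hα0 ht]
    simp only [Nat.cast_zero, mul_zero, zero_sub, pow_zero, one_mul, zero_add]
    ring
  -- assemble
  have hfinal : α * ∑' k, ∫ s in Ioo 0 t, F k s
      = Real.Gamma (1-α) * (t^(-α) * (Real.Gamma (1-α))⁻¹ - mlu α t)
        - t^(-α) * mlu α t := by
    rw [← tsum_mul_left, tsum_congr hIval]
    have hsplit : ∑' k : ℕ, ((-1:ℝ)^k * (Real.Gamma (1-α) *
        (t^(α*(k:ℝ)-α) * (Real.Gamma (α*(k:ℝ)+1-α))⁻¹)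
        - t^(α*(k:ℝ)-α) * (Real.Gamma (α*(k:ℝ)+1))⁻¹))
        = Real.Gamma (1-α) * (∑' k : ℕ, (-1:ℝ)^k *
            (t^(α*(k:ℝ)-α) * (Real.Gamma (α*(k:ℝ)+1-α))⁻¹))
          - ∑' k : ℕ, (-1:ℝ)^k * (t^(α*(k:ℝ)-α) * (Real.Gamma (α*(k:ℝ)+1))⁻¹) := by
      rw [← tsum_mul_left, ← Summable.tsum_sub (hs1.mul_left _) hs2]
      exact tsum_congr (fun k => by ring)
    rw [hsplit, hS1, hS2]
  rw [hswap, hfinal]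
  have hcancel : Real.Gamma (1-α) * (t^(-α) * (Real.Gamma (1-α))⁻¹) = t^(-α) := by
    field_simp
  linear_combination hcancel

noncomputable def mlv (α s : ℝ) : ℝ := Real.Gamma (α+1) / (Real.Gamma (α+1) + s^α)

section V
variable {α t : ℝ}

lemma gamma_a1_pos (hα0 : 0 < α) : 0 < Real.Gamma (α+1) :=
  Real.Gamma_pos_of_pos (by linarith)

lemma mlv_denom_pos (hα0 : 0 < α) {s : ℝ} (hs : 0 ≤ s) :
    0 < Real.Gamma (α+1) + s^α := by
  have h1 := gamma_a1_pos hα0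
  have h2 : (0:ℝ) ≤ s^α := Real.rpow_nonneg hs α
  linarith

lemma mlv_zero (hα0 : 0 < α) : mlv α 0 = 1 := by
  rw [mlv, Real.zero_rpow hα0.ne', add_zero, div_self (gamma_a1_pos hα0).ne']

lemma mlv_pos (hα0 : 0 < α) {s : ℝ} (hs : 0 ≤ s) : 0 < mlv α s :=
  div_pos (gamma_a1_pos hα0) (mlv_denom_pos hα0 hs)

lemma mlv_le_one (hα0 : 0 < α) {s : ℝ} (hs : 0 ≤ s) : mlv α s ≤ 1 := by
  rw [mlv, div_le_one (mlv_denom_pos hα0 hs)]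
  have : (0:ℝ) ≤ s^α := Real.rpow_nonneg hs α
  linarith

lemma continuousOn_mlv (hα0 : 0 < α) : ContinuousOn (mlv α) (Ici 0) := by
  have hc : Continuous (fun s : ℝ => s ^ α) := by
    apply continuous_iff_continuousAt.mpr
    intro x
    rcases eq_or_ne x 0 with rfl | hx
    · exact Real.continuousAt_rpow_const 0 α (Or.inr hα0.le)
    · exact Real.continuousAt_rpow_const x α (Or.inl hx)
  exact ContinuousOn.div continuousOn_const
    (continuous_const.add hc).continuousOn
    (fun x hx => (mlv_denom_pos hα0 hx).ne')

lemma mlv_diff (hα0 : 0 < α) {s : ℝ} (hs0 : 0 ≤ s) (hst : s ≤ t) :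
    -(t^α - s^α) / (Real.Gamma (α+1) + t^α) ≤ mlv α t - mlv α s ∧
      mlv α t - mlv α s ≤ 0 := by
  set b := Real.Gamma (α+1) with hb
  have hb0 : 0 < b := gamma_a1_pos hα0
  have hds : 0 < b + s^α := mlv_denom_pos hα0 hs0
  have hdt : 0 < b + t^α := mlv_denom_pos hα0 (le_trans hs0 hst)
  have hmono : s^α ≤ t^α := Real.rpow_le_rpow hs0 hst hα0.le
  have key : mlv α s - mlv α t ≤ (t^α - s^α)/(b + t^α) := by
    rw [mlv, mlv, ← hb, div_sub_div _ _ hds.ne' hdt.ne',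
      div_le_div_iff₀ (mul_pos hds hdt) hdt]
    nlinarith [mul_nonneg (mul_nonneg (sub_nonneg.mpr hmono) hdt.le)
      (Real.rpow_nonneg hs0 α), hb0.le, hds.le, hdt.le]
  constructor
  · rw [neg_div]
    linarith [key]
  · have : mlv α t ≤ mlv α s := by
      rw [mlv, mlv, ← hb]
      exact div_le_div_of_nonneg_left hb0.le hds (by linarith)
    linarith

lemma caputo_v (hα0 : 0 < α) (hα1 : α < 1) (ht : 0 < t) :
    IntegrableOn (fun s : ℝ => (mlv α t - mlv α s) * (t-s) ^ (-α-1)) (Ioo 0 t) ∧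
    -(Real.Gamma (1-α) * mlv α t) ≤ t ^ (-α) * (mlv α t - 1) +
      α * ∫ s in Ioo 0 t, (mlv α t - mlv α s) * (t-s) ^ (-α-1) := by
  set b := Real.Gamma (α+1) with hb
  have hb0 : 0 < b := gamma_a1_pos hα0
  have hdt : 0 < b + t^α := mlv_denom_pos hα0 ht.le
  have hαα : (0:ℝ) < α := hα0
  -- pointwise bounds for the integrand
  have hptwise : ∀ s ∈ Ioo (0:ℝ) t,
      -(1/(b + t^α)) * ((t^α - s^α) * (t-s) ^ (-α-1)) ≤
        (mlv α t - mlv α s) * (t-s) ^ (-α-1) ∧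
      |(mlv α t - mlv α s) * (t-s) ^ (-α-1)| ≤
        (1/(b + t^α)) * ((t^α - s^α) * (t-s) ^ (-α-1)) := by
    intro s hs
    have hts : (0:ℝ) < t - s := sub_pos.mpr hs.2
    have hker : (0:ℝ) ≤ (t-s) ^ (-α-1) := Real.rpow_nonneg hts.le _
    obtain ⟨hd1, hd2⟩ := mlv_diff hα0 hs.1.le hs.2.le (t := t)
    constructor
    · calc -(1/(b + t^α)) * ((t^α - s^α) * (t-s) ^ (-α-1))
          = (-(t^α - s^α)/(b + t^α)) * (t-s) ^ (-α-1) := by ring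
        _ ≤ (mlv α t - mlv α s) * (t-s) ^ (-α-1) :=
            mul_le_mul_of_nonneg_right hd1 hker
    · rw [abs_mul, abs_of_nonneg hker, abs_of_nonpos hd2]
      calc -(mlv α t - mlv α s) * (t-s) ^ (-α-1)
          ≤ ((t^α - s^α)/(b + t^α)) * (t-s) ^ (-α-1) := by
            apply mul_le_mul_of_nonneg_right _ hker
            rw [neg_div] at hd1
            linarith
        _ = (1/(b + t^α)) * ((t^α - s^α) * (t-s) ^ (-α-1)) := by ring
  -- integrability
  have hgint : IntegrableOn (fun s : ℝ => (t^α - s^α) * (t-s) ^ (-α-1)) (Ioo 0 t) :=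
    integrableOn_g hα0 hα1 hα0 ht
  have hint : IntegrableOn (fun s : ℝ => (mlv α t - mlv α s) * (t-s) ^ (-α-1)) (Ioo 0 t) := by
    apply Integrable.mono' (hgint.const_mul (1/(b + t^α)))
    · apply ContinuousOn.aestronglyMeasurable _ measurableSet_Ioo
      apply ContinuousOn.mul
      · apply ContinuousOn.sub continuousOn_const
        exact (continuousOn_mlv hα0).mono (fun x hx => le_of_lt hx.1) |>.congr (fun x _ => rfl)
      · intro x hx
        apply ContinuousAt.continuousWithinAt
        exact (Real.continuousAt_rpow_const (t-x) (-α-1)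
          (Or.inl (sub_pos.mpr hx.2).ne')).comp (continuousAt_const.sub continuousAt_id)
    · filter_upwards [ae_restrict_mem measurableSet_Ioo] with s hs
      exact (hptwise s hs).2
  refine ⟨hint, ?_⟩
  -- lower bound for the integral
  have hlow : -(1/(b + t^α)) * ∫ s in Ioo 0 t, (t^α - s^α) * (t-s) ^ (-α-1) ≤
      ∫ s in Ioo 0 t, (mlv α t - mlv α s) * (t-s) ^ (-α-1) := by
    rw [← MeasureTheory.integral_const_mul]
    apply MeasureTheory.setIntegral_mono_on (hgint.const_mul _) hint measurableSet_Ioo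
    intro s hs
    exact (hptwise s hs).1
  have hKI := key_integral hα0 hα1 hα0 ht
  rw [show α - α = (0:ℝ) by ring, Real.rpow_zero, one_mul,
    show α+1-α = (1:ℝ) by ring, Real.Gamma_one, div_one, ← hb] at hKI
  -- t^(-α) * (mlv α t - 1) = -(t^α/(b+t^α)) * t^(-α) ...
  have htα : (0:ℝ) < t^α := Real.rpow_pos_of_pos ht α
  have hv1 : t ^ (-α) * (mlv α t - 1) = -(1/(b + t^α)) := by
    rw [mlv, ← hb]
    rw [Real.rpow_neg ht.le]
    field_simp
    ring
  have hItot : α * ∫ s in Ioo 0 t, (mlv α t - mlv α s) * (t-s) ^ (-α-1) ≥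
      -(1/(b + t^α)) * (Real.Gamma (1-α) * b - 1) := by
    have := mul_le_mul_of_nonneg_left hlow hα0.le
    calc -(1/(b + t^α)) * (Real.Gamma (1-α) * b - 1)
        = -(1/(b + t^α)) * (α * ∫ s in Ioo 0 t, (t^α - s^α) * (t-s) ^ (-α-1)) := by
          rw [hKI]
      _ = α * (-(1/(b + t^α)) * ∫ s in Ioo 0 t, (t^α - s^α) * (t-s) ^ (-α-1)) := by ring
      _ ≤ α * ∫ s in Ioo 0 t, (mlv α t - mlv α s) * (t-s) ^ (-α-1) := this
  rw [hv1]
  have hfin : -(Real.Gamma (1-α) * mlv α t)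
      = -(1/(b + t^α)) + -(1/(b + t^α)) * (Real.Gamma (1-α) * b - 1) := by
    rw [mlv, ← hb]
    field_simp
    ring
  rw [hfin]
  linarith [hItot]
end V



section Compare
variable {α : ℝ}

lemma sigma_mlu_le (hα0 : 0 < α) (hα1 : α < 1) {t : ℝ} (ht : 0 < t)
    {σ : ℝ} (hσ : σ = 1 ∨ σ = -1) : σ * mlu α t ≤ mlv α t := by
  have hσ1 : σ ≤ 1 := by rcases hσ with rfl | rfl <;> norm_num
  have hΓ1α : (0:ℝ) < Real.Gamma (1-α) := Real.Gamma_pos_of_pos (by linarith)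
  by_contra hcon
  push_neg at hcon
  set φ : ℝ → ℝ := fun s => σ * mlu α s - mlv α s with hφ
  have hφc : ContinuousOn φ (Icc 0 t) := by
    apply ContinuousOn.sub
    · exact (continuous_const.mul (continuous_mlu hα0)).continuousOn
    · exact (continuousOn_mlv hα0).mono (fun x hx => hx.1)
  obtain ⟨t₀, ht₀mem, ht₀max⟩ := isCompact_Icc.exists_isMaxOn
    (nonempty_Icc.mpr ht.le) hφc
  have hmax : ∀ s ∈ Icc (0:ℝ) t, φ s ≤ φ t₀ := ht₀max
  have hφt : 0 < φ t := by rw [hφ]; simp only; linarith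
  have hφt₀ : 0 < φ t₀ := lt_of_lt_of_le hφt (hmax t (right_mem_Icc.mpr ht.le))
  have hφ0 : φ 0 ≤ 0 := by
    rw [hφ]; simp only [mlu_zero hα0, mlv_zero hα0]; linarith
  have ht₀pos : 0 < t₀ := by
    rcases eq_or_lt_of_le ht₀mem.1 with h | h
    · exfalso; rw [← h] at hφt₀; linarith
    · exact h
  -- Caputo identity for σ * mlu at t₀
  have hu := caputo_eq hα0 hα1 ht₀pos
  have huint := caputo_integrable hα0 hα1 ht₀pos
  have hvc := caputo_v hα0 hα1 ht₀pos
  -- multiply hu by σ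
  have huσ : t₀ ^ (-α) * (σ * mlu α t₀ - σ) +
      α * ∫ s in Ioo 0 t₀, (σ * mlu α t₀ - σ * mlu α s) * (t₀-s) ^ (-α-1)
      = -(Real.Gamma (1-α) * (σ * mlu α t₀)) := by
    have h1 : ∫ s in Ioo 0 t₀, (σ * mlu α t₀ - σ * mlu α s) * (t₀-s) ^ (-α-1)
        = σ * ∫ s in Ioo 0 t₀, (mlu α t₀ - mlu α s) * (t₀-s) ^ (-α-1) := by
      rw [← MeasureTheory.integral_const_mul]
      exact MeasureTheory.integral_congr_ae (Filter.Eventually.of_forall (fun s => by ring))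
    rw [h1]
    have := congrArg (fun z => σ * z) hu
    calc t₀ ^ (-α) * (σ * mlu α t₀ - σ) +
        α * (σ * ∫ s in Ioo 0 t₀, (mlu α t₀ - mlu α s) * (t₀-s) ^ (-α-1))
        = σ * (t₀ ^ (-α) * (mlu α t₀ - 1) +
          α * ∫ s in Ioo 0 t₀, (mlu α t₀ - mlu α s) * (t₀-s) ^ (-α-1)) := by ring
      _ = σ * -(Real.Gamma (1-α) * mlu α t₀) := by rw [hu]
      _ = -(Real.Gamma (1-α) * (σ * mlu α t₀)) := by ring
  -- integrability of the σ-scaled integrand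
  have huσint : IntegrableOn
      (fun s : ℝ => (σ * mlu α t₀ - σ * mlu α s) * (t₀-s) ^ (-α-1)) (Ioo 0 t₀) := by
    have := huint.const_mul σ
    exact this.congr (Filter.Eventually.of_forall (fun s => by ring))
  -- the φ-integral is nonnegative
  have hsub : Ioo (0:ℝ) t₀ ⊆ Icc 0 t :=
    fun s hs => ⟨hs.1.le, le_trans hs.2.le ht₀mem.2⟩
  have hφint : 0 ≤ ∫ s in Ioo 0 t₀, (φ t₀ - φ s) * (t₀-s) ^ (-α-1) := by
    apply MeasureTheory.setIntegral_nonneg measurableSet_Ioo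
    intro s hs
    apply mul_nonneg
    · have := hmax s (hsub hs)
      linarith
    · exact Real.rpow_nonneg (by linarith [hs.2] : (0:ℝ) ≤ t₀ - s) _
  have hφeq : ∫ s in Ioo 0 t₀, (φ t₀ - φ s) * (t₀-s) ^ (-α-1)
      = (∫ s in Ioo 0 t₀, (σ * mlu α t₀ - σ * mlu α s) * (t₀-s) ^ (-α-1))
        - ∫ s in Ioo 0 t₀, (mlv α t₀ - mlv α s) * (t₀-s) ^ (-α-1) := by
    rw [← MeasureTheory.integral_sub huσint hvc.1]
    apply MeasureTheory.integral_congr_ae (Filter.Eventually.of_forall (fun s => ?_))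
    rw [hφ]
    simp only
    ring
  -- contradiction
  have hker0 : (0:ℝ) < t₀ ^ (-α) := Real.rpow_pos_of_pos ht₀pos _
  have key : t₀ ^ (-α) * (φ t₀ - (σ - 1)) +
      α * ∫ s in Ioo 0 t₀, (φ t₀ - φ s) * (t₀-s) ^ (-α-1)
      ≤ -(Real.Gamma (1-α) * φ t₀) := by
    rw [hφeq]
    have h2 := hvc.2
    have hφval : φ t₀ = σ * mlu α t₀ - mlv α t₀ := by rw [hφ]
    nlinarith [huσ, h2, hα0]
  have hlhs : 0 < t₀ ^ (-α) * (φ t₀ - (σ - 1)) +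
      α * ∫ s in Ioo 0 t₀, (φ t₀ - φ s) * (t₀-s) ^ (-α-1) := by
    have h1 : 0 < t₀ ^ (-α) * (φ t₀ - (σ - 1)) := by
      apply mul_pos hker0
      linarith
    nlinarith [hφint, hα0]
  have hrhs : -(Real.Gamma (1-α) * φ t₀) < 0 := by
    have := mul_pos hΓ1α hφt₀
    linarith
  linarith

lemma abs_mlu_le (hα0 : 0 < α) (hα1 : α < 1) {t : ℝ} (ht : 0 < t) :
    |mlu α t| ≤ mlv α t := by
  rw [abs_le]
  constructor
  · have := sigma_mlu_le hα0 hα1 ht (Or.inr rfl : (-1:ℝ) = 1 ∨ (-1:ℝ) = -1)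
    linarith
  · have := sigma_mlu_le hα0 hα1 ht (Or.inl rfl : (1:ℝ) = 1 ∨ (1:ℝ) = -1)
    linarith

/-- The decay bound for the Mittag-Leffler series. -/
lemma abs_mlP_decay (hα0 : 0 < α) (hα1 : α < 1) {y : ℝ} (hy : 0 < y) :
    |mlP α y| ≤ Real.Gamma (α+1) / (Real.Gamma (α+1) + y) := by
  set t := y ^ (α⁻¹) with htdef
  have ht : 0 < t := Real.rpow_pos_of_pos hy _
  have hty : t ^ α = y := Real.rpow_inv_rpow hy.le hα0.ne'
  have h1 := abs_mlu_le hα0 hα1 ht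
  rw [mlu, mlv, hty] at h1
  exact h1
end Compare



theorem stmt12 (α : ℝ) (hα : α ∈ Set.Ioo (0 : ℝ) 1) (lam1 : ℝ) (hlam1 : 0 < lam1)
    (E : ℝ → ℝ) (hE : ∀ x : ℝ, E x = ∑' k : ℕ, x ^ k * (Real.Gamma (α * k + 1))⁻¹) :
    ∃ C > 0, ∀ lam : ℕ → ℝ, (∀ k, lam1 ≤ lam k) →
      ∀ a : ℕ → ℝ, Summable (fun k => (lam k) ^ 2 * (a k) ^ 2) →
      ∀ t : ℝ, 0 < t →
        ∑' k : ℕ, (lam k) ^ 2 * (E (-(lam k * t ^ α))) ^ 2 * (a k) ^ 2 ≤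
          C * ((1 + t ^ α) ^ 2)⁻¹ * ∑' k : ℕ, (lam k) ^ 2 * (a k) ^ 2 := by
  obtain ⟨hα0, hα1⟩ := hα
  set b := Real.Gamma (α+1) with hb
  have hb0 : 0 < b := gamma_a1_pos hα0
  set c₀ : ℝ := max b 1 with hc₀
  have hc₀1 : (1:ℝ) ≤ c₀ := le_max_right _ _
  have hc₀0 : (0:ℝ) < c₀ := lt_of_lt_of_le one_pos hc₀1
  set m : ℝ := min c₀ lam1 with hm
  have hm0 : 0 < m := lt_min hc₀0 hlam1
  refine ⟨(c₀/m)^2, by positivity, ?_⟩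
  intro lam hlam a ha t ht
  have htα : (0:ℝ) < t ^ α := Real.rpow_pos_of_pos ht α
  have hX : (0:ℝ) < 1 + t ^ α := by linarith
  set X : ℝ := ((1 + t ^ α)^2)⁻¹ with hX2
  have hXpos : 0 < X := by positivity
  have key : ∀ k : ℕ, (lam k) ^ 2 * (E (-(lam k * t ^ α))) ^ 2 * (a k) ^ 2 ≤
      ((c₀/m)^2 * X) * ((lam k) ^ 2 * (a k) ^ 2) := by
    intro k
    have hlamk : 0 < lam k := lt_of_lt_of_le hlam1 (hlam k)
    have hy : 0 < lam k * t ^ α := by positivity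
    have hEeq : E (-(lam k * t ^ α)) = mlP α (lam k * t ^ α) := by
      rw [hE, mlP]
    have h1 : |E (-(lam k * t ^ α))| ≤ b / (b + lam k * t ^ α) := by
      rw [hEeq]
      exact abs_mlP_decay hα0 hα1 hy
    have h2 : b / (b + lam k * t ^ α) ≤ c₀ / (c₀ + lam k * t ^ α) := by
      rw [div_le_div_iff₀ (by positivity) (by positivity)]
      have hbc : b ≤ c₀ := le_max_left _ _
      nlinarith [hy.le]
    have h3 : c₀ / (c₀ + lam k * t ^ α) ≤ c₀ / (m * (1 + t ^ α)) := by
      apply div_le_div_of_nonneg_left hc₀0.le (by positivity)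
      have hmc : m ≤ c₀ := min_le_left _ _
      have hml : m ≤ lam1 := min_le_right _ _
      have : m * t ^ α ≤ lam k * t ^ α := by
        apply mul_le_mul_of_nonneg_right _ htα.le
        linarith [hlam k]
      nlinarith
    have hEb : |E (-(lam k * t ^ α))| ≤ c₀ / (m * (1 + t ^ α)) :=
      le_trans h1 (le_trans h2 h3)
    have hE2 : (E (-(lam k * t ^ α)))^2 ≤ (c₀/m)^2 * X := by
      rw [← sq_abs]
      calc |E (-(lam k * t ^ α))|^2 ≤ (c₀ / (m * (1 + t ^ α)))^2 :=
            pow_le_pow_left₀ (abs_nonneg _) hEb 2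
        _ = (c₀/m)^2 * X := by
            rw [hX2]
            field_simp
    calc (lam k) ^ 2 * (E (-(lam k * t ^ α))) ^ 2 * (a k) ^ 2
        ≤ (lam k) ^ 2 * ((c₀/m)^2 * X) * (a k) ^ 2 := by
          apply mul_le_mul_of_nonneg_right _ (sq_nonneg _)
          exact mul_le_mul_of_nonneg_left hE2 (sq_nonneg _)
      _ = ((c₀/m)^2 * X) * ((lam k) ^ 2 * (a k) ^ 2) := by ring
  have hsumR : Summable (fun k => ((c₀/m)^2 * X) * ((lam k) ^ 2 * (a k) ^ 2)) :=
    ha.mul_left _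
  have hsumL : Summable (fun k => (lam k) ^ 2 * (E (-(lam k * t ^ α))) ^ 2 * (a k) ^ 2) := by
    apply Summable.of_nonneg_of_le (fun k => by positivity) key hsumR
  calc ∑' k : ℕ, (lam k) ^ 2 * (E (-(lam k * t ^ α))) ^ 2 * (a k) ^ 2
      ≤ ∑' k : ℕ, ((c₀/m)^2 * X) * ((lam k) ^ 2 * (a k) ^ 2) :=
        Summable.tsum_le_tsum key hsumL hsumR
    _ = ((c₀/m)^2 * X) * ∑' k : ℕ, (lam k) ^ 2 * (a k) ^ 2 := tsum_mul_left
    _ = (c₀/m)^2 * X * ∑' k : ℕ, (lam k) ^ 2 * (a k) ^ 2 := by ring
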